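/- Let p be a prime, n ≥ 2 and s ≥ 1 integers, and let f(X) = ∏_{j=1}^{h} (X − α_j)^{u_j}, where α_1, …, α_h ∈ closure(F_p) are pairwise distinct and u_j ∈ {±1, …, ±(n−1)} for each j. Let v_1, …, v_{2s} ∈ closure(F_p) and suppose there exist indices k with 1 ≤ k ≤ 2s and ℓ with 1 ≤ ℓ ≤ h such that v_k − α_ℓ ≠ v_i − α_j for all pairs (i, j) ≠ (k, ℓ) with 1 ≤ i ≤ 2s, 1 ≤ j ≤ h. Then, with β = α_ℓ − v_k, the order ord_β(P_{v,f}) is not divisible by n; in particular, P_{v,f}(X) is not an n-th power of a rational function in closure(F_p)(X). -/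

import Mathlib

open Polynomial

open scoped Classical

noncomputable section

namespace RestrictedCoords

variable {K L : Type*} [Field K] [Field L]

/-- The degree of a rational function: the maximum of the degrees of its numerator
and denominator (in lowest terms). -/
def ratDeg (f : RatFunc K) : ℕ := max f.num.natDegree f.denom.natDegree

/-- The order of `f` at `w`: the unique integer such that `(X - w) ^ (ordAt w f) * f`
extends to a rational function with neither a zero nor a pole at `w`.
(Here negative values correspond to poles.) -/
def ordAt (w : K) (f : RatFunc K) : ℤ :=
  (f.num.rootMultiplicity w : ℤ) - (f.denom.rootMultiplicity w : ℤ)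

/-- `f` has a (finite) pole at `w`. -/
def HasPoleAt (f : RatFunc K) (w : K) : Prop := f.denom.eval w = 0

/-- The image of a rational function under a field embedding. -/
def ratMap (φ : K →+* L) (f : RatFunc K) : RatFunc L :=
  algebraMap L[X] (RatFunc L) (f.num.map φ) / algebraMap L[X] (RatFunc L) (f.denom.map φ)

/-- The shifted rational function `f(X + v)`. -/
def shift (v : K) (f : RatFunc K) : RatFunc K :=
  algebraMap K[X] (RatFunc K) (f.num.comp (X + C v)) /
    algebraMap K[X] (RatFunc K) (f.denom.comp (X + C v))

/-- `P_{v,f}(X) = ∏_{i=1}^{s} f(X + v_i) / f(X + v_{s+i})`. -/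
def Pvf (s : ℕ) (f : RatFunc K) (v : Fin (s + s) → K) : RatFunc K :=
  ∏ i : Fin s, shift (v (i.castAdd s)) f / shift (v (i.addNat s)) f

/-- `L_{v,f}(X) = ∑_{i=1}^{s} (f(X + v_i) - f(X + v_{s+i}))`. -/
def Lvf (s : ℕ) (f : RatFunc K) (v : Fin (s + s) → K) : RatFunc K :=
  ∑ i : Fin s, (shift (v (i.castAdd s)) f - shift (v (i.addNat s)) f)

/-- Membership in the class `Q_{d,n}`: rational functions of degree at most `d`
which are not an `n`-th power of a rational function over the algebraic closure. -/
def MemQ (d n : ℕ) (f : RatFunc K) : Prop :=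
  ratDeg f ≤ d ∧
    ¬ ∃ g : RatFunc (AlgebraicClosure K),
        ratMap (algebraMap K (AlgebraicClosure K)) f = g ^ n

/-- Membership in the class `R_d`: rational functions of degree at most `d`
which have at least one finite pole (over the algebraic closure) whose order is not
a multiple of `p`. -/
def MemR (p d : ℕ) (f : RatFunc K) : Prop :=
  ratDeg f ≤ d ∧
    ∃ w : AlgebraicClosure K,
      HasPoleAt (ratMap (algebraMap K (AlgebraicClosure K)) f) w ∧
        ¬ (p : ℤ) ∣ ordAt w (ratMap (algebraMap K (AlgebraicClosure K)) f)

/-- Membership in the exceptional class `E`: rational functions of the form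
`α (h(X)^p - h(X)) + β X`. -/
def MemE (p : ℕ) (f : RatFunc L) : Prop :=
  ∃ α β : L, ∃ h : RatFunc L,
    f = RatFunc.C α * (h ^ p - h) + RatFunc.C β * RatFunc.X

/-- Membership in the class `P_d`: rational functions of degree `d` such that for
every nonzero `ω` the difference `f(X + ω) - f(X)` is not of the exceptional form
`α (g(X)^p - g(X)) + β X` over the algebraic closure. -/
def MemP (p d : ℕ) (f : RatFunc K) : Prop :=
  ratDeg f = d ∧
    ∀ ω : K, ω ≠ 0 →
      ¬ MemE p (ratMap (algebraMap K (AlgebraicClosure K)) (shift ω f - f))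

/-- The set `S_r(A)` of elements of `F_{q^r}` all of whose coordinates in the basis `θ`
belong to `A`. -/
def SrSet {Fq K : Type*} [Field Fq] [Fintype Fq] [Field K] [Algebra Fq K]
    {r : ℕ} (θ : Module.Basis (Fin r) Fq K) (A : Finset Fq) : Finset K :=
  (Fintype.piFinset fun _ : Fin r => A).image fun a => ∑ i, a i • θ i

/-- The mixed character sum `∑_{x ∈ T} χ(f₁(x)) ψ(f₂(x))`, where the points `x`
which are poles of `f₁` or `f₂` are excluded from the summation. -/
def charSum (χ : MulChar K ℂ) (ψ : AddChar K ℂ) (f₁ f₂ : RatFunc K)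
    (T : Finset K) : ℂ :=
  ∑ x ∈ T,
    if HasPoleAt f₁ x ∨ HasPoleAt f₂ x then 0
    else χ (f₁.eval (RingHom.id K) x) * ψ (f₂.eval (RingHom.id K) x)

/-- `κ_s(ρ) = (sρ(2ρ-1) + ρ - 1) / (4s(sρ+1))`. -/
def kappa (s : ℕ) (ρ : ℝ) : ℝ :=
  ((s : ℝ) * ρ * (2 * ρ - 1) + ρ - 1) / (4 * (s : ℝ) * ((s : ℝ) * ρ + 1))


lemma rm_prod {ι : Type*} (t : Finset ι) (g : ι → K[X]) (hg : ∀ i ∈ t, g i ≠ 0) (w : K) :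
    (∏ i ∈ t, g i).rootMultiplicity w = ∑ i ∈ t, (g i).rootMultiplicity w := by
  induction t using Finset.cons_induction with
  | empty => simp [Polynomial.rootMultiplicity_eq_zero]
  | cons a t ha ih =>
      rw [Finset.prod_cons, Finset.sum_cons,
        Polynomial.rootMultiplicity_mul, ih (fun i hi => hg i (Finset.mem_cons_of_mem hi))]
      exact mul_ne_zero (hg a (Finset.mem_cons_self a t))
        (Finset.prod_ne_zero_iff.2 fun i hi => hg i (Finset.mem_cons_of_mem hi))

lemma cross (f : RatFunc K) {p q : K[X]} (hq : q ≠ 0)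
    (h : f = algebraMap K[X] (RatFunc K) p / algebraMap K[X] (RatFunc K) q) :
    f.num * q = f.denom * p := by
  apply RatFunc.algebraMap_injective K
  have h2 : algebraMap K[X] (RatFunc K) f.num / algebraMap K[X] (RatFunc K) f.denom
      = algebraMap K[X] (RatFunc K) p / algebraMap K[X] (RatFunc K) q := by
    rw [f.num_div_denom, h]
  rw [div_eq_div_iff (RatFunc.algebraMap_ne_zero f.denom_ne_zero)
    (RatFunc.algebraMap_ne_zero hq)] at h2
  simpa [map_mul, mul_comm] using h2

lemma ordAt_div (w : K) {p q : K[X]} (hp : p ≠ 0) (hq : q ≠ 0) :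
    ordAt w (algebraMap K[X] (RatFunc K) p / algebraMap K[X] (RatFunc K) q)
      = (p.rootMultiplicity w : ℤ) - q.rootMultiplicity w := by
  set f := algebraMap K[X] (RatFunc K) p / algebraMap K[X] (RatFunc K) q with hf
  have hc := cross f hq hf
  have hnum : f.num ≠ 0 := by
    have : f ≠ 0 := div_ne_zero (RatFunc.algebraMap_ne_zero hp) (RatFunc.algebraMap_ne_zero hq)
    simpa [RatFunc.num_ne_zero] using this
  have h1 : (f.num * q).rootMultiplicity w = (f.denom * p).rootMultiplicity w := by rw [hc]
  rw [Polynomial.rootMultiplicity_mul (mul_ne_zero hnum hq),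
    Polynomial.rootMultiplicity_mul (mul_ne_zero f.denom_ne_zero hp)] at h1
  unfold ordAt
  omega

lemma ordAt_mul (w : K) {f g : RatFunc K} (hf : f ≠ 0) (hg : g ≠ 0) :
    ordAt w (f * g) = ordAt w f + ordAt w g := by
  have h : f * g = algebraMap K[X] (RatFunc K) (f.num * g.num)
      / algebraMap K[X] (RatFunc K) (f.denom * g.denom) := by
    rw [map_mul, map_mul, ← div_mul_div_comm, f.num_div_denom, g.num_div_denom]
  have hfn : f.num ≠ 0 := by simpa [RatFunc.num_ne_zero] using hf
  have hgn : g.num ≠ 0 := by simpa [RatFunc.num_ne_zero] using hg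
  rw [h, ordAt_div w (mul_ne_zero hfn hgn) (mul_ne_zero f.denom_ne_zero g.denom_ne_zero),
    Polynomial.rootMultiplicity_mul (mul_ne_zero hfn hgn),
    Polynomial.rootMultiplicity_mul (mul_ne_zero f.denom_ne_zero g.denom_ne_zero)]
  unfold ordAt; push_cast; ring

lemma div_div_div_eq {G : Type*} [DivisionCommMonoid G] (a b c d : G) :
    a / b / (c / d) = a * d / (b * c) := by
  rw [div_eq_mul_inv (a / b), inv_div, div_mul_div_comm]

lemma ordAt_div' (w : K) {f g : RatFunc K} (hf : f ≠ 0) (hg : g ≠ 0) :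
    ordAt w (f / g) = ordAt w f - ordAt w g := by
  have h : f / g = algebraMap K[X] (RatFunc K) (f.num * g.denom)
      / algebraMap K[X] (RatFunc K) (f.denom * g.num) := by
    rw [map_mul, map_mul]
    conv_lhs => rw [← f.num_div_denom, ← g.num_div_denom]
    rw [div_div_div_eq]
  have hfn : f.num ≠ 0 := by simpa [RatFunc.num_ne_zero] using hf
  have hgn : g.num ≠ 0 := by simpa [RatFunc.num_ne_zero] using hg
  rw [h, ordAt_div w (mul_ne_zero hfn g.denom_ne_zero) (mul_ne_zero f.denom_ne_zero hgn),
    Polynomial.rootMultiplicity_mul (mul_ne_zero hfn g.denom_ne_zero),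
    Polynomial.rootMultiplicity_mul (mul_ne_zero f.denom_ne_zero hgn)]
  unfold ordAt; push_cast; ring

lemma ordAt_pow (w : K) {g : RatFunc K} (hg : g ≠ 0) (n : ℕ) :
    ordAt w (g ^ n) = n * ordAt w g := by
  induction n with
  | zero => simp [ordAt]
  | succ m ih =>
      rw [pow_succ, ordAt_mul w (pow_ne_zero m hg) hg, ih]; push_cast; ring

lemma ordAt_prod {ι : Type*} (w : K) (t : Finset ι) (g : ι → RatFunc K)
    (hg : ∀ i ∈ t, g i ≠ 0) :
    ordAt w (∏ i ∈ t, g i) = ∑ i ∈ t, ordAt w (g i) := by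
  induction t using Finset.cons_induction with
  | empty => simp [ordAt]
  | cons a t ha ih =>
      rw [Finset.prod_cons, Finset.sum_cons,
        ordAt_mul w (hg a (Finset.mem_cons_self a t))
          (Finset.prod_ne_zero_iff.2 fun i hi => hg i (Finset.mem_cons_of_mem hi)),
        ih (fun i hi => hg i (Finset.mem_cons_of_mem hi))]

lemma rm_X_sub_C_pow (β a : K) (e : ℕ) :
    ((X - C a) ^ e).rootMultiplicity β = if β = a then e else 0 := by
  split_ifs with h
  · subst h; exact Polynomial.rootMultiplicity_X_sub_C_pow β e
  · refine Polynomial.rootMultiplicity_eq_zero ?_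
    simp only [Polynomial.IsRoot, eval_pow, eval_sub, eval_X, eval_C]
    exact pow_ne_zero _ (sub_ne_zero.2 h)

lemma zpow_eq_div (x : K) (m : ℤ) :
    x ^ m = x ^ m.toNat / x ^ (-m).toNat := by
  rcases le_or_gt 0 m with h | h
  · rw [show (-m).toNat = 0 by omega, pow_zero, div_one, ← zpow_natCast,
      Int.toNat_of_nonneg h]
  · rw [show m.toNat = 0 by omega, pow_zero, ← zpow_natCast, Int.toNat_of_nonneg (by omega),
      one_div, ← zpow_neg, neg_neg]


/-- The key step in the proof of Lemma 4.1 of the paper: if some shifted zero/pole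
`v_k - α_ℓ` of the data is not matched by any other shifted zero/pole, then
`P_{v,f}` has order `≢ 0 (mod n)` at `β = α_ℓ - v_k`, and in particular is not an
`n`-th power. -/
theorem statement_10 (p : ℕ) [Fact p.Prime] (n s h : ℕ) (hn : 2 ≤ n) (hs : 1 ≤ s)
    (α : Fin h → AlgebraicClosure (ZMod p)) (hα : Function.Injective α)
    (u : Fin h → ℤ) (hu : ∀ j, u j ≠ 0 ∧ |u j| ≤ (n : ℤ) - 1)
    (f : RatFunc (AlgebraicClosure (ZMod p)))
    (hf : f = ∏ j, (RatFunc.X - RatFunc.C (α j)) ^ (u j))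
    (v : Fin (s + s) → AlgebraicClosure (ZMod p))
    (k : Fin (s + s)) (ℓ : Fin h)
    (hkl : ∀ (i : Fin (s + s)) (j : Fin h), (i, j) ≠ (k, ℓ) → v k - α ℓ ≠ v i - α j) :
    ¬ (n : ℤ) ∣ ordAt (α ℓ - v k) (Pvf s f v) ∧
      ¬ ∃ g : RatFunc (AlgebraicClosure (ZMod p)), Pvf s f v = g ^ n := by
  let K0 := AlgebraicClosure (ZMod p)
  set β : K0 := α ℓ - v k with hβ
  set aM := algebraMap K0[X] (RatFunc K0) with haM
  set A : K0[X] := ∏ j, (X - C (α j)) ^ (u j).toNat with hA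
  set B : K0[X] := ∏ j, (X - C (α j)) ^ (-(u j)).toNat with hB
  have hXC : ∀ a : K0, (X - C a : K0[X]) ≠ 0 := fun a => Polynomial.X_sub_C_ne_zero a
  have hA0 : A ≠ 0 := Finset.prod_ne_zero_iff.2 fun j _ => pow_ne_zero _ (hXC _)
  have hB0 : B ≠ 0 := Finset.prod_ne_zero_iff.2 fun j _ => pow_ne_zero _ (hXC _)
  have hfAB : f = aM A / aM B := by
    rw [hf]
    calc ∏ j, (RatFunc.X - RatFunc.C (α j)) ^ (u j)
        = ∏ j, (aM ((X - C (α j)) ^ (u j).toNat) / aM ((X - C (α j)) ^ (-(u j)).toNat)) := by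
          refine Finset.prod_congr rfl fun j _ => ?_
          rw [map_pow, map_pow, ← zpow_eq_div]
          congr 1
          simp [haM, map_sub, RatFunc.algebraMap_X, RatFunc.algebraMap_C]
      _ = aM A / aM B := by
          rw [Finset.prod_div_distrib, ← map_prod, ← map_prod]
  have hcrossAB : f.num * B = f.denom * A := cross f hB0 hfAB
  -- shift formula
  have hcompA : ∀ w : K0, A.comp (X + C w) ≠ 0 := fun w =>
    Polynomial.comp_X_add_C_ne_zero_iff.2 hA0
  have hcompB : ∀ w : K0, B.comp (X + C w) ≠ 0 := fun w =>
    Polynomial.comp_X_add_C_ne_zero_iff.2 hB0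
  have hshift : ∀ w : K0, shift w f = aM (A.comp (X + C w)) / aM (B.comp (X + C w)) := by
    intro w
    unfold shift
    rw [div_eq_div_iff (RatFunc.algebraMap_ne_zero (Polynomial.comp_X_add_C_ne_zero_iff.2
        f.denom_ne_zero)) (RatFunc.algebraMap_ne_zero (hcompB w)),
      ← map_mul, ← map_mul, ← Polynomial.mul_comp, ← Polynomial.mul_comp, hcrossAB,
      mul_comm f.denom A]
  have hshift0 : ∀ w : K0, shift w f ≠ 0 := fun w => by
    rw [hshift w]
    exact div_ne_zero (RatFunc.algebraMap_ne_zero (hcompA w))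
      (RatFunc.algebraMap_ne_zero (hcompB w))
  -- root multiplicity of shifted A and B
  have hrmA : ∀ (w : K0) (e : Fin h → ℕ),
      ((∏ j, (X - C (α j)) ^ e j : K0[X]).comp (X + C w)).rootMultiplicity β
        = ∑ j, if β = α j - w then e j else 0 := by
    intro w e
    have hc : (∏ j, (X - C (α j)) ^ e j : K0[X]).comp (X + C w)
        = ∏ j, (X - C (α j - w)) ^ e j := by
      rw [Polynomial.prod_comp]
      refine Finset.prod_congr rfl fun j _ => ?_
      rw [Polynomial.pow_comp, Polynomial.sub_comp, Polynomial.X_comp, Polynomial.C_comp]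
      ring_nf
      rw [map_sub]
      ring
    rw [hc, rm_prod _ _ (fun j _ => pow_ne_zero _ (hXC _))]
    exact Finset.sum_congr rfl fun j _ => rm_X_sub_C_pow β (α j - w) (e j)
  -- ordAt of shift
  have hordshift : ∀ w : K0, ordAt β (shift w f)
      = ∑ j, u j * (if β = α j - w then 1 else 0) := by
    intro w
    rw [hshift w, ordAt_div β (hcompA w) (hcompB w), hA, hB, hrmA w, hrmA w]
    push_cast [Finset.sum_ite_eq]
    rw [← Finset.sum_sub_distrib]
    refine Finset.sum_congr rfl fun j _ => ?_
    split_ifs with hcond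
    · push_cast; omega
    · simp
  -- ordAt of Pvf
  have hordP : ordAt β (Pvf s f v)
      = ∑ i : Fin s, (ordAt β (shift (v (i.castAdd s)) f) - ordAt β (shift (v (i.addNat s)) f)) := by
    unfold Pvf
    rw [ordAt_prod β _ _ (fun i _ => div_ne_zero (hshift0 _) (hshift0 _))]
    exact Finset.sum_congr rfl fun i _ => ordAt_div' β (hshift0 _) (hshift0 _)
  -- evaluation of the shifted order via hkl
  have hS : ∀ i' : Fin (s + s),
      (∑ j, u j * (if β = α j - v i' then 1 else 0)) = if i' = k then u ℓ else 0 := by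
    intro i'
    split_ifs with hik
    · subst hik
      rw [Finset.sum_eq_single ℓ]
      · rw [if_pos hβ, mul_one]
      · intro j _ hj
        rw [if_neg, mul_zero]
        intro hc
        exact hkl i' j (by simp [Prod.ext_iff, hj]) (by rw [hβ] at hc; linear_combination -hc)
      · intro hℓ; exact absurd (Finset.mem_univ ℓ) hℓ
    · refine Finset.sum_eq_zero fun j _ => ?_
      rw [if_neg, mul_zero]
      intro hc
      exact hkl i' j (by simp [Prod.ext_iff, hik]) (by rw [hβ] at hc; linear_combination -hc)
  have hord2 : ordAt β (Pvf s f v)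
      = ∑ i : Fin s, ((if i.castAdd s = k then u ℓ else 0) - (if i.addNat s = k then u ℓ else 0)) := by
    rw [hordP]
    exact Finset.sum_congr rfl fun i _ => by rw [hordshift, hordshift, hS, hS]
  -- not divisible by n
  have hnotdvd : ∀ m : ℤ, m = u ℓ ∨ m = -u ℓ → ¬ (n : ℤ) ∣ m := by
    rintro m hm hdvd
    have h1 : (n : ℤ) ∣ u ℓ := by
      rcases hm with rfl | rfl
      · exact hdvd
      · exact (dvd_neg.1 hdvd)
    have h2 : (n : ℤ) ≤ |u ℓ| := Int.le_of_dvd (abs_pos.2 (hu ℓ).1) ((dvd_abs _ _).2 h1)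
    have h3 := (hu ℓ).2
    omega
  have key : ¬ (n : ℤ) ∣ ordAt β (Pvf s f v) := by
    rcases lt_or_ge (k : ℕ) s with hk | hk
    · set i₀ : Fin s := ⟨k, hk⟩ with hi₀
      have heq : ordAt β (Pvf s f v) = u ℓ := by
        rw [hord2]
        have hne : ∀ i : Fin s, i.addNat s ≠ k := by
          intro i hc
          rw [Fin.ext_iff] at hc; simp at hc; omega
        have hiff : ∀ i : Fin s, (i.castAdd s = k) ↔ i = i₀ := by
          intro i
          simp only [Fin.ext_iff, hi₀]
          simp
        have hterm : ∀ i : Fin s, ((if i.castAdd s = k then u ℓ else 0)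
            - (if i.addNat s = k then u ℓ else 0)) = if i = i₀ then u ℓ else 0 := by
          intro i
          rw [if_neg (hne i), sub_zero]
          simp only [hiff i]
        rw [Finset.sum_congr rfl fun i _ => hterm i, Finset.sum_ite_eq' Finset.univ i₀]
        simp
      rw [heq]; exact hnotdvd _ (Or.inl rfl)
    · have hks : (k : ℕ) - s < s := by have := k.2; omega
      set i₀ : Fin s := ⟨(k : ℕ) - s, hks⟩ with hi₀
      have heq : ordAt β (Pvf s f v) = -u ℓ := by
        rw [hord2]
        have hne : ∀ i : Fin s, i.castAdd s ≠ k := by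
          intro i hc
          rw [Fin.ext_iff] at hc; simp at hc; have := i.2; omega
        have hiff : ∀ i : Fin s, (i.addNat s = k) ↔ i = i₀ := by
          intro i
          simp only [Fin.ext_iff, hi₀]
          simp
          omega
        have hterm : ∀ i : Fin s, ((if i.castAdd s = k then u ℓ else 0)
            - (if i.addNat s = k then u ℓ else 0)) = if i = i₀ then -u ℓ else 0 := by
          intro i
          rw [if_neg (hne i), zero_sub]
          simp only [hiff i]
          split_ifs <;> simp
        rw [Finset.sum_congr rfl fun i _ => hterm i, Finset.sum_ite_eq' Finset.univ i₀]
        simp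
      rw [heq]; exact hnotdvd _ (Or.inr rfl)
  refine ⟨key, ?_⟩
  rintro ⟨g, hg⟩
  by_cases hg0 : g = 0
  · apply key
    rw [hg, hg0, zero_pow (by omega : n ≠ 0)]
    have h0 : ordAt β (0 : RatFunc K0) = 0 := by simp [ordAt]
    rw [h0]
    exact dvd_zero _
  · apply key
    rw [hg, ordAt_pow β hg0 n]
    exact dvd_mul_right _ _

end RestrictedCoords
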